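/- In the ring of formal power series ℂ[[z]] the following identity holds: P(rz) · ( r^n + Σ_{k≥1} (r^n − s^n)(a r^{−1} s^{1−n})^k z^k ) = r^n · P(sz), where P(z) = ∏_{k=1}^{n} (1 − a r^{−k−1} s^{k−n} z). Equivalently, the generating function Σ_{k≥0} Φ_k^+ z^k of the highest weight eigenvalues of the evaluation representation V_n(a) equals r^{deg P} P(sz)/P(rz). -/

import Mathlib

open PowerSeries

lemma aux_geom (q t u : ℂ) :
    (1 - PowerSeries.C q * PowerSeries.X) *
      PowerSeries.mk (fun k => if k = 0 then t else u * q ^ k)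
    = PowerSeries.C t + PowerSeries.C (u * q - t * q) * PowerSeries.X := by
  ext m
  rw [sub_mul, one_mul, mul_assoc]
  cases m with
  | zero => simp
  | succ m =>
    rw [map_sub, PowerSeries.coeff_C_mul, PowerSeries.coeff_succ_X_mul, map_add,
      PowerSeries.coeff_mk, PowerSeries.coeff_mk, PowerSeries.coeff_C, PowerSeries.coeff_C_mul,
      PowerSeries.coeff_X]
    cases m with
    | zero => simp; ring
    | succ k => simp; ring

lemma aux_tel {M : Type*} [CommMonoid M] (g : ℕ → M) (n : ℕ) :
    g 1 * ∏ k ∈ Finset.Icc 1 n, g (k + 1) = (∏ k ∈ Finset.Icc 1 n, g k) * g (n + 1) := by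
  induction n with
  | zero => simp
  | succ m ih =>
    rw [Finset.prod_Icc_succ_top (by omega), Finset.prod_Icc_succ_top (by omega),
      ← mul_assoc, ih]


/-- In `ℂ[[z]]`:
`P(rz)·(r^n + Σ_{k≥1} (r^n − s^n)(a r^{−1} s^{1−n})^k z^k) = r^n · P(sz)`, where
`P(z) = ∏_{k=1}^{n} (1 − a r^{−k−1} s^{k−n} z)`; i.e. the generating function
`Σ_{k≥0} Φ_k^+ z^k` of the highest weight eigenvalues of `V_n(a)` equals
`r^{deg P} P(sz)/P(rz)`. -/
theorem generating_function_positive (n : ℕ) (r s a : ℂ) (hr : r ≠ 0) (hs : s ≠ 0)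
    (ha : a ≠ 0) (hrs : r ≠ s) :
    (∏ k ∈ Finset.Icc 1 n,
        (1 - PowerSeries.C (a * r ^ (-(k : ℤ) - 1) * s ^ ((k : ℤ) - (n : ℤ)) * r)
          * PowerSeries.X))
      * PowerSeries.mk (fun k =>
          if k = 0 then r ^ n
          else (r ^ n - s ^ n) * (a * r⁻¹ * s ^ ((1 : ℤ) - (n : ℤ))) ^ k)
    = PowerSeries.C (r ^ n)
      * ∏ k ∈ Finset.Icc 1 n,
          (1 - PowerSeries.C (a * r ^ (-(k : ℤ) - 1) * s ^ ((k : ℤ) - (n : ℤ)) * s)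
            * PowerSeries.X) := by
  have hzr : ∀ k : ℕ, (r : ℂ) ^ (-(k : ℤ) - 1) = (r ^ (k + 1))⁻¹ := by
    intro k
    rw [show -(k : ℤ) - 1 = -((k + 1 : ℕ) : ℤ) by push_cast; ring, zpow_neg, zpow_natCast]
  have hzs : ∀ k : ℕ, (s : ℂ) ^ ((k : ℤ) - (n : ℤ)) = s ^ k * (s ^ n)⁻¹ := by
    intro k
    rw [zpow_sub₀ hs, zpow_natCast, zpow_natCast, div_eq_mul_inv]
  set q : ℂ := a * r⁻¹ * s ^ ((1 : ℤ) - (n : ℤ)) with hqdef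
  have hq : q = a * r⁻¹ * (s * (s ^ n)⁻¹) := by
    rw [hqdef, show ((1 : ℤ) - (n : ℤ)) = (((1 : ℕ) : ℤ) - (n : ℤ)) by norm_num, hzs 1,
      pow_one]
  set g : ℕ → PowerSeries ℂ := fun k =>
    1 - PowerSeries.C (a * r ^ (-(k : ℤ) - 1) * s ^ ((k : ℤ) - (n : ℤ)) * r)
      * PowerSeries.X with hgdef
  -- scalar facts
  have hc1 : a * r ^ (-((1 : ℕ) : ℤ) - 1) * s ^ (((1 : ℕ) : ℤ) - (n : ℤ)) * r = q := by
    rw [hzr 1, hzs 1, hq]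
    field_simp
  have hfac : ∀ k : ℕ, a * r ^ (-(k : ℤ) - 1) * s ^ ((k : ℤ) - (n : ℤ)) * s
      = a * r ^ (-((k + 1 : ℕ) : ℤ) - 1) * s ^ (((k + 1 : ℕ) : ℤ) - (n : ℤ)) * r := by
    intro k
    rw [hzr k, hzs k, hzr (k + 1), hzs (k + 1)]
    field_simp
    ring
  have hd : r ^ n * (a * r ^ (-((n + 1 : ℕ) : ℤ) - 1) * s ^ (((n + 1 : ℕ) : ℤ) - (n : ℤ)) * r)
      = -((r ^ n - s ^ n) * q - r ^ n * q) := by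
    rw [hzr (n + 1), hzs (n + 1), hq]
    field_simp
    ring
  -- structural facts
  have hg1 : g 1 = 1 - PowerSeries.C q * PowerSeries.X := by
    simp only [hgdef]
    rw [hc1]
  have hXne : (1 - PowerSeries.C q * PowerSeries.X) ≠ 0 := by
    intro h
    have := congrArg (PowerSeries.constantCoeff) h
    simp at this
  have hB : (∏ k ∈ Finset.Icc 1 n,
      (1 - PowerSeries.C (a * r ^ (-(k : ℤ) - 1) * s ^ ((k : ℤ) - (n : ℤ)) * s)
        * PowerSeries.X)) = ∏ k ∈ Finset.Icc 1 n, g (k + 1) := by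
    apply Finset.prod_congr rfl
    intro k _
    simp only [hgdef]
    rw [hfac k]
  have key : PowerSeries.C (r ^ n)
        + PowerSeries.C ((r ^ n - s ^ n) * q - r ^ n * q) * PowerSeries.X
      = PowerSeries.C (r ^ n) * g (n + 1) := by
    have hgn : g (n + 1) = 1 - PowerSeries.C
        (a * r ^ (-((n + 1 : ℕ) : ℤ) - 1) * s ^ (((n + 1 : ℕ) : ℤ) - (n : ℤ)) * r)
        * PowerSeries.X := rfl
    rw [hgn, mul_sub, mul_one, ← mul_assoc (PowerSeries.C (r ^ n)), ← map_mul, hd, map_neg]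
    ring
  apply mul_left_cancel₀ hXne
  have lhs_eq := aux_geom q (r ^ n) (r ^ n - s ^ n)
  rw [hB, mul_left_comm, lhs_eq, key, mul_left_comm (1 - PowerSeries.C q * PowerSeries.X),
    ← hg1, aux_tel g n]
  ring
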